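/- arXiv:2601.09357 — 2 statements merged into one kernel-verified Lean document; each statement's English description precedes it below -/
import Mathlib

section
/- Refined exponential formula by number of blocks: let a : ℕ → ℚ be any sequence and k ≥ 0 a fixed natural number. For n ≥ 0 define β_{n,k} = Σ_π Π_{B ∈ π} a(|B|), where the sum ranges over all set partitions π of {1,…,n} having exactly k blocks. Then in ℚ[[X]] one has Σ_{n≥0} β_{n,k} X^n/n! = (1/k!)·( Σ_{n≥1} a(n) X^n/n! )^k. -/
/-- A set partition of `{1,…,n}` (modelled as `Fin n`). -/
def IsSetPartition (n : ℕ) (π : Finset (Finset (Fin n))) : Prop :=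
  (∀ B ∈ π, B.Nonempty) ∧
  (∀ B ∈ π, ∀ C ∈ π, B ≠ C → B ∩ C = ∅) ∧
  π.sup id = Finset.univ

open scoped Classical in
/-- The set of all set partitions of `{1,…,n}`. -/
noncomputable def setPartitions (n : ℕ) : Finset (Finset (Finset (Fin n))) :=
  Finset.univ.filter (IsSetPartition n)

open scoped Classical in
/-- `β_{n,k} = Σ_π Π_{B ∈ π} a(|B|)`, summed over all set partitions of
`{1,…,n}` having exactly `k` blocks. -/
noncomputable def betaBlocks (a : ℕ → ℚ) (n k : ℕ) : ℚ :=
  ∑ π ∈ (setPartitions n).filter (fun π => π.card = k), ∏ B ∈ π, a B.card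

open scoped Classical
open Finset

variable {α β : Type*}


/-- Partitions of a finset `s`. -/
noncomputable def partitionsOf (s : Finset α) : Finset (Finset (Finset α)) :=
  (s.powerset.powerset).filter (fun π =>
    (∀ B ∈ π, B.Nonempty) ∧ (∀ B ∈ π, ∀ C ∈ π, B ≠ C → B ∩ C = ∅) ∧ π.sup id = s)

noncomputable def Pw (a : ℕ → ℚ) (s : Finset α) (k : ℕ) : ℚ :=
  ∑ π ∈ (partitionsOf s).filter (fun π => π.card = k), ∏ B ∈ π, a B.card

lemma mem_partitionsOf {s : Finset α} {π : Finset (Finset α)} :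
    π ∈ partitionsOf s ↔
      (∀ B ∈ π, B.Nonempty) ∧ (∀ B ∈ π, ∀ C ∈ π, B ≠ C → B ∩ C = ∅) ∧ π.sup id = s := by
  constructor
  · intro h
    exact (Finset.mem_filter.mp h).2
  · intro h
    refine Finset.mem_filter.mpr ⟨?_, h⟩
    simp only [Finset.mem_powerset]
    intro B hB
    simp only [Finset.mem_powerset]
    exact h.2.2 ▸ Finset.le_sup (f := id) hB

lemma block_subset {s : Finset α} {π : Finset (Finset α)} (h : π ∈ partitionsOf s)
    {B : Finset α} (hB : B ∈ π) : B ⊆ s :=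
  (mem_partitionsOf.mp h).2.2 ▸ Finset.le_sup (f := id) hB

lemma partitionsOf_empty : partitionsOf (∅ : Finset α) = {∅} := by
  ext π
  simp only [mem_partitionsOf, Finset.mem_singleton]
  constructor
  · rintro ⟨h1, _, h3⟩
    by_contra hne
    obtain ⟨B, hB⟩ := Finset.nonempty_iff_ne_empty.mpr hne
    have hBs : B ⊆ (∅ : Finset α) := h3 ▸ Finset.le_sup (f := id) hB
    have := h1 B hB
    simp [Finset.subset_empty.mp hBs] at this
  · rintro rfl
    simp

lemma Pw_empty (a : ℕ → ℚ) (k : ℕ) :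
    Pw a (∅ : Finset α) k = if k = 0 then 1 else 0 := by
  rw [Pw, partitionsOf_empty]
  rcases Nat.eq_zero_or_pos k with rfl | hk
  · simp [Finset.filter_singleton, Finset.card_empty]
  · rw [if_neg hk.ne', Finset.filter_singleton]
    simp [Finset.card_empty, hk.ne', Ne.symm hk.ne']

lemma sup_image_finset (π : Finset (Finset α)) (f : α → β) :
    π.sup (fun B => B.image f) = (π.sup id).image f := by
  induction π using Finset.induction with
  | empty => simp
  | insert _ _ _ ih => simp [Finset.sup_insert, Finset.image_union, ih]

lemma image_image_cancel {s : Finset α} {B : Finset α} (hB : B ⊆ s)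
    (f : α → β) (g : β → α) (hgf : ∀ x ∈ s, g (f x) = x) :
    (B.image f).image g = B := by
  rw [Finset.image_image]
  exact (Finset.image_congr (g := id) (fun x hx => hgf x (hB hx))).trans Finset.image_id

lemma partition_image_mem (k : ℕ) (s : Finset α) (t : Finset β) (f : α → β) (g : β → α)
    (hf : ∀ x ∈ s, f x ∈ t) (hg : ∀ y ∈ t, g y ∈ s)
    (hgf : ∀ x ∈ s, g (f x) = x) (hfg : ∀ y ∈ t, f (g y) = y)
    (himf : s.image f = t) :
    ∀ π ∈ (partitionsOf s).filter (fun π => π.card = k),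
      π.image (fun B => B.image f) ∈ (partitionsOf t).filter (fun π => π.card = k) := by
  intro π hπ
  rw [Finset.mem_filter] at hπ
  obtain ⟨hπp, hπk⟩ := hπ
  obtain ⟨h1, h2, h3⟩ := mem_partitionsOf.mp hπp
  have hsub : ∀ B ∈ π, B ⊆ s := fun B hB => block_subset hπp hB
  have hinj : ∀ B ∈ π, ∀ C ∈ π, B.image f = C.image f → B = C := by
    intro B hB C hC h
    have := congrArg (fun u => Finset.image g u) h
    simpa [image_image_cancel (hsub B hB) f g hgf,
      image_image_cancel (hsub C hC) f g hgf] using this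
  refine Finset.mem_filter.mpr ⟨mem_partitionsOf.mpr ⟨?_, ?_, ?_⟩, ?_⟩
  · intro B' hB'
    obtain ⟨B, hB, rfl⟩ := Finset.mem_image.mp hB'
    exact (h1 B hB).image f
  · intro B' hB' C' hC' hne
    obtain ⟨B, hB, rfl⟩ := Finset.mem_image.mp hB'
    obtain ⟨C, hC, rfl⟩ := Finset.mem_image.mp hC'
    have hBC : B ≠ C := fun h => hne (by rw [h])
    have hd := h2 B hB C hC hBC
    ext y
    simp only [Finset.mem_inter, Finset.mem_image, Finset.notMem_empty, iff_false]
    rintro ⟨⟨b, hb, rfl⟩, ⟨c, hc, hcb⟩⟩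
    have : c = b := by
      have h1' := hgf b (hsub B hB hb)
      have h2' := hgf c (hsub C hC hc)
      rw [← h2', hcb, h1']
    subst this
    have : c ∈ B ∩ C := Finset.mem_inter.mpr ⟨hb, hc⟩
    simp [hd] at this
  · rw [Finset.sup_image]
    show π.sup (fun B => B.image f) = t
    rw [sup_image_finset, h3, himf]
  · rw [Finset.card_image_of_injOn (fun B hB C hC => hinj B hB C hC), hπk]

lemma Pw_congr_maps (a : ℕ → ℚ) (s : Finset α) (t : Finset β) (k : ℕ)
    (f : α → β) (g : β → α)
    (hf : ∀ x ∈ s, f x ∈ t) (hg : ∀ y ∈ t, g y ∈ s)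
    (hgf : ∀ x ∈ s, g (f x) = x) (hfg : ∀ y ∈ t, f (g y) = y) :
    Pw a s k = Pw a t k := by
  have himf : s.image f = t := by
    ext y
    simp only [Finset.mem_image]
    constructor
    · rintro ⟨x, hx, rfl⟩; exact hf x hx
    · intro hy; exact ⟨g y, hg y hy, hfg y hy⟩
  have himg : t.image g = s := by
    ext x
    simp only [Finset.mem_image]
    constructor
    · rintro ⟨y, hy, rfl⟩; exact hg y hy
    · intro hx; exact ⟨f x, hf x hx, hgf x hx⟩
  refine Finset.sum_nbij' (i := fun π => π.image (fun B => B.image f))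
    (j := fun π => π.image (fun B => B.image g)) ?_ ?_ ?_ ?_ ?_
  · exact partition_image_mem k s t f g hf hg hgf hfg himf
  · exact partition_image_mem k t s g f hg hf hfg hgf himg
  · intro π hπ
    rw [Finset.mem_filter] at hπ
    have hsub : ∀ B ∈ π, B ⊆ s := fun B hB => block_subset hπ.1 hB
    show (π.image (fun B => B.image f)).image (fun B => B.image g) = π
    rw [Finset.image_image]
    exact (Finset.image_congr (g := id)
      (fun B hB => image_image_cancel (hsub B hB) f g hgf)).trans Finset.image_id
  · intro π hπ
    rw [Finset.mem_filter] at hπ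
    have hsub : ∀ B ∈ π, B ⊆ t := fun B hB => block_subset hπ.1 hB
    show (π.image (fun B => B.image g)).image (fun B => B.image f) = π
    rw [Finset.image_image]
    exact (Finset.image_congr (g := id)
      (fun B hB => image_image_cancel (hsub B hB) g f hfg)).trans Finset.image_id
  · intro π hπ
    rw [Finset.mem_filter] at hπ
    have hsub : ∀ B ∈ π, B ⊆ s := fun B hB => block_subset hπ.1 hB
    have hinjs : Set.InjOn f s := fun x hx y hy h => by
      rw [← hgf x hx, h, hgf y hy]
    rw [Finset.prod_image]
    · refine Finset.prod_congr rfl (fun B hB => ?_)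
      rw [Finset.card_image_of_injOn (hinjs.mono (by exact_mod_cast hsub B hB))]
    · intro B hB C hC h
      have := congrArg (fun u => Finset.image g u) h
      simpa [image_image_cancel (hsub B hB) f g hgf,
        image_image_cancel (hsub C hC) f g hgf] using this

lemma Pw_card_eq (a : ℕ → ℚ) {s : Finset α} {t : Finset β} (h : s.card = t.card) (k : ℕ) :
    Pw a s k = Pw a t k := by
  rcases s.eq_empty_or_nonempty with rfl | hs
  · have ht : t = ∅ := Finset.card_eq_zero.mp (h ▸ rfl)
    subst ht
    rw [Pw_empty, Pw_empty]
  · have hα : Nonempty α := ⟨hs.choose⟩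
    have ht : t.Nonempty := Finset.card_pos.mp (h ▸ Finset.card_pos.mpr hs)
    have hβ : Nonempty β := ⟨ht.choose⟩
    set e := Finset.equivOfCardEq h with he
    set f : α → β := fun x => if hx : x ∈ s then (e ⟨x, hx⟩ : β) else Classical.arbitrary β
      with hfdef
    set g : β → α := fun y => if hy : y ∈ t then (e.symm ⟨y, hy⟩ : α) else Classical.arbitrary α
      with hgdef
    refine Pw_congr_maps a s t k f g ?_ ?_ ?_ ?_
    · intro x hx; simp only [hfdef, dif_pos hx]; exact (e ⟨x, hx⟩).2
    · intro y hy; simp only [hgdef, dif_pos hy]; exact (e.symm ⟨y, hy⟩).2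
    · intro x hx
      simp only [hfdef, hgdef, dif_pos hx, dif_pos (e ⟨x, hx⟩).2]
      have : (⟨(e ⟨x, hx⟩ : β), (e ⟨x, hx⟩).2⟩ : {y // y ∈ t}) = e ⟨x, hx⟩ := rfl
      rw [this, Equiv.symm_apply_apply]
    · intro y hy
      simp only [hfdef, hgdef, dif_pos hy, dif_pos (e.symm ⟨y, hy⟩).2]
      have : (⟨(e.symm ⟨y, hy⟩ : α), (e.symm ⟨y, hy⟩).2⟩ : {x // x ∈ s}) = e.symm ⟨y, hy⟩ := rfl
      rw [this, Equiv.apply_symm_apply]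

lemma sup_erase_of_partition {s : Finset α} {π : Finset (Finset α)}
    (hπ : π ∈ partitionsOf s) {B : Finset α} (hB : B ∈ π) :
    (π.erase B).sup id = s \ B := by
  obtain ⟨h1, h2, h3⟩ := mem_partitionsOf.mp hπ
  apply le_antisymm
  · apply Finset.sup_le
    intro C hC
    obtain ⟨hCB, hCπ⟩ := Finset.mem_erase.mp hC
    intro x hx
    refine Finset.mem_sdiff.mpr ⟨block_subset hπ hCπ hx, fun hxB => ?_⟩
    have : x ∈ C ∩ B := Finset.mem_inter.mpr ⟨hx, hxB⟩
    rw [h2 C hCπ B hB hCB] at this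
    exact absurd this (Finset.notMem_empty x)
  · intro x hx
    obtain ⟨hxs, hxB⟩ := Finset.mem_sdiff.mp hx
    have : x ∈ π.sup id := h3 ▸ hxs
    obtain ⟨C, hC, hxC⟩ := Finset.mem_sup.mp this
    refine Finset.mem_sup.mpr ⟨C, Finset.mem_erase.mpr ⟨fun h => hxB (h ▸ hxC), hC⟩, hxC⟩

lemma erase_mem_partitionsOf {s : Finset α} {π : Finset (Finset α)}
    (hπ : π ∈ partitionsOf s) {B : Finset α} (hB : B ∈ π) :
    π.erase B ∈ partitionsOf (s \ B) := by
  obtain ⟨h1, h2, h3⟩ := mem_partitionsOf.mp hπ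
  refine mem_partitionsOf.mpr ⟨fun C hC => h1 C (Finset.mem_of_mem_erase hC),
    fun C hC D hD h => h2 C (Finset.mem_of_mem_erase hC) D (Finset.mem_of_mem_erase hD) h,
    sup_erase_of_partition hπ hB⟩

lemma insert_mem_partitionsOf {s : Finset α} {t : Finset α} (hts : t ⊆ s) (htne : t.Nonempty)
    {ρ : Finset (Finset α)} (hρ : ρ ∈ partitionsOf (s \ t)) :
    insert t ρ ∈ partitionsOf s ∧ t ∉ ρ := by
  obtain ⟨h1, h2, h3⟩ := mem_partitionsOf.mp hρ
  have htρ : t ∉ ρ := by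
    intro h
    have : t ⊆ s \ t := block_subset hρ h
    obtain ⟨x, hx⟩ := htne
    exact (Finset.mem_sdiff.mp (this hx)).2 hx
  have hdisj : ∀ C ∈ ρ, t ∩ C = ∅ := by
    intro C hC
    have hCs : C ⊆ s \ t := block_subset hρ hC
    ext x
    simp only [Finset.mem_inter, Finset.notMem_empty, iff_false]
    rintro ⟨hxt, hxC⟩
    exact (Finset.mem_sdiff.mp (hCs hxC)).2 hxt
  refine ⟨mem_partitionsOf.mpr ⟨?_, ?_, ?_⟩, htρ⟩
  · intro C hC
    rcases Finset.mem_insert.mp hC with rfl | hC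
    · exact htne
    · exact h1 C hC
  · intro C hC D hD hne
    rcases Finset.mem_insert.mp hC with hCt | hCp <;>
      rcases Finset.mem_insert.mp hD with hDt | hDp
    · exact absurd (hCt.trans hDt.symm) hne
    · rw [hCt]; exact hdisj D hDp
    · rw [hDt, Finset.inter_comm]; exact hdisj C hCp
    · exact h2 C hCp D hDp hne
  · rw [Finset.sup_insert, h3]
    show t ∪ (s \ t) = s
    exact Finset.union_sdiff_of_subset hts

lemma Pw_rec (a : ℕ → ℚ) (s : Finset α) (k : ℕ) :
    Pw a s (k + 1) * (k + 1) =
      ∑ t ∈ s.powerset.filter (fun t => t.Nonempty), a t.card * Pw a (s \ t) k := by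
  have lhs_eq : Pw a s (k + 1) * (k + 1) =
      ∑ p ∈ ((partitionsOf s).filter (fun π => π.card = k + 1)).sigma (fun π => π),
        ∏ C ∈ p.1, a C.card := by
    rw [Finset.sum_sigma]
    rw [Pw, Finset.sum_mul]
    refine Finset.sum_congr rfl (fun π hπ => ?_)
    rw [Finset.mem_filter] at hπ
    calc (∏ B ∈ π, a B.card) * ((k : ℚ) + 1)
        = (π.card : ℚ) * ∏ C ∈ π, a C.card := by rw [hπ.2]; push_cast; ring
      _ = ∑ _x ∈ π, ∏ C ∈ π, a C.card := by rw [Finset.sum_const, nsmul_eq_mul]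
      _ = ∑ B ∈ π, ∏ C ∈ (⟨π, B⟩ : (_ : Finset (Finset α)) × Finset α).fst, a C.card := rfl
  have rhs_eq : (∑ t ∈ s.powerset.filter (fun t => t.Nonempty), a t.card * Pw a (s \ t) k) =
      ∑ p ∈ (s.powerset.filter (fun t => t.Nonempty)).sigma
          (fun t => (partitionsOf (s \ t)).filter (fun ρ => ρ.card = k)),
        a p.1.card * ∏ C ∈ p.2, a C.card := by
    rw [Finset.sum_sigma]
    refine Finset.sum_congr rfl (fun t ht => ?_)
    rw [Pw, Finset.mul_sum]
  rw [lhs_eq, rhs_eq]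
  refine Finset.sum_nbij' (i := fun p => ⟨p.2, p.1.erase p.2⟩)
    (j := fun p => ⟨insert p.1 p.2, p.1⟩) ?_ ?_ ?_ ?_ ?_
  · rintro ⟨π, B⟩ hp
    rw [Finset.mem_sigma] at hp
    obtain ⟨hπ, hB⟩ := hp
    rw [Finset.mem_filter] at hπ
    refine Finset.mem_sigma.mpr ⟨?_, ?_⟩
    · refine Finset.mem_filter.mpr ⟨Finset.mem_powerset.mpr (block_subset hπ.1 hB),
        (mem_partitionsOf.mp hπ.1).1 B hB⟩
    · refine Finset.mem_filter.mpr ⟨erase_mem_partitionsOf hπ.1 hB, ?_⟩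
      rw [Finset.card_erase_of_mem hB, hπ.2]
      omega
  · rintro ⟨t, ρ⟩ hp
    rw [Finset.mem_sigma] at hp
    obtain ⟨ht, hρ⟩ := hp
    rw [Finset.mem_filter] at ht hρ
    obtain ⟨hins, htρ⟩ := insert_mem_partitionsOf (Finset.mem_powerset.mp ht.1) ht.2 hρ.1
    refine Finset.mem_sigma.mpr ⟨Finset.mem_filter.mpr ⟨hins, ?_⟩, Finset.mem_insert_self _ _⟩
    rw [Finset.card_insert_of_notMem htρ, hρ.2]
  · rintro ⟨π, B⟩ hp
    rw [Finset.mem_sigma] at hp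
    show (⟨insert B (π.erase B), B⟩ : (_ : Finset (Finset α)) × Finset α) = ⟨π, B⟩
    rw [Finset.insert_erase hp.2]
  · rintro ⟨t, ρ⟩ hp
    rw [Finset.mem_sigma] at hp
    obtain ⟨ht, hρ⟩ := hp
    rw [Finset.mem_filter] at ht hρ
    obtain ⟨_, htρ⟩ := insert_mem_partitionsOf (Finset.mem_powerset.mp ht.1) ht.2 hρ.1
    show (⟨t, (insert t ρ).erase t⟩ : (_ : Finset α) × Finset (Finset α)) = ⟨t, ρ⟩
    rw [Finset.erase_insert htρ]
  · rintro ⟨π, B⟩ hp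
    rw [Finset.mem_sigma] at hp
    exact (Finset.mul_prod_erase π (fun C => a C.card) hp.2).symm

lemma setPartitions_eq (n : ℕ) : setPartitions n = partitionsOf (Finset.univ : Finset (Fin n)) := by
  ext π
  simp only [setPartitions, Finset.mem_filter, Finset.mem_univ, true_and, mem_partitionsOf,
    IsSetPartition, ← Finset.disjoint_iff_inter_eq_empty]
  have hinst : (fun (a b : Fin n) => Classical.propDecidable (a = b)) = instDecidableEqFin n :=
    Subsingleton.elim _ _
  rw [hinst]

lemma betaBlocks_eq_Pw (a : ℕ → ℚ) (n k : ℕ) :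
    betaBlocks a n k = Pw a (Finset.univ : Finset (Fin n)) k := by
  rw [betaBlocks, Pw, setPartitions_eq]

lemma Pw_zero (a : ℕ → ℚ) (s : Finset α) :
    Pw a s 0 = if s = ∅ then 1 else 0 := by
  rcases eq_or_ne s ∅ with rfl | hs
  · rw [Pw_empty]; simp
  · rw [if_neg hs, Pw]
    refine Finset.sum_eq_zero ?_
    intro π hπ
    rw [Finset.mem_filter] at hπ
    exfalso
    have hcard := Finset.card_eq_zero.mp hπ.2
    subst hcard
    have := (mem_partitionsOf.mp hπ.1).2.2
    simp only [Finset.sup_empty] at this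
    exact hs (this ▸ rfl)

lemma betaBlocks_zero (a : ℕ → ℚ) (n : ℕ) :
    betaBlocks a n 0 = if n = 0 then 1 else 0 := by
  rw [betaBlocks_eq_Pw, Pw_zero]
  congr 1
  simp only [eq_iff_iff]
  constructor
  · intro h
    by_contra hn
    have : (Finset.univ : Finset (Fin n)).card = 0 := by rw [h]; simp
    simp only [Finset.card_univ, Fintype.card_fin] at this
    exact hn this
  · rintro rfl
    exact Finset.eq_empty_of_forall_notMem (fun x => x.elim0)

lemma beta_rec (a : ℕ → ℚ) (n k : ℕ) :
    betaBlocks a n (k + 1) * (k + 1) =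
      ∑ j ∈ Finset.range (n + 1),
        if j = 0 then 0 else (n.choose j : ℚ) * a j * betaBlocks a (n - j) k := by
  rw [betaBlocks_eq_Pw, Pw_rec]
  refine Eq.trans (Finset.sum_congr rfl
      (g := fun t => a t.card * betaBlocks a (n - t.card) k) (fun t ht => ?_)) ?_
  · congr 1
    rw [betaBlocks_eq_Pw]
    refine Pw_card_eq a ?_ k
    convert Finset.card_sdiff_of_subset (Finset.subset_univ t) using 1
    · exact congrArg Finset.card (Finset.ext fun x => by simp)
    · simp
  rw [Finset.sum_filter]
  have hstep : ∀ t ∈ (Finset.univ : Finset (Fin n)).powerset,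
      (if t.Nonempty then a t.card * betaBlocks a (n - t.card) k else 0) =
      (if t.card = 0 then 0 else a t.card * betaBlocks a (n - t.card) k) := by
    intro t ht
    rcases eq_or_ne t.card 0 with h0 | h0
    · rw [Finset.card_eq_zero] at h0; subst h0; simp
    · rw [if_pos (Finset.card_pos.mp (Nat.pos_of_ne_zero h0)), if_neg h0]
  rw [Finset.sum_congr rfl hstep,
    Finset.sum_powerset_apply_card (f := fun j => if j = 0 then 0 else a j * betaBlocks a (n - j) k)]
  simp only [Finset.card_univ, Fintype.card_fin]
  refine Finset.sum_congr rfl (fun j hj => ?_)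
  rcases eq_or_ne j 0 with rfl | hj0
  · simp
  · rw [if_neg hj0, if_neg hj0, nsmul_eq_mul]
    ring

lemma coeff_pow_eq (a : ℕ → ℚ) (k : ℕ) : ∀ n : ℕ,
    PowerSeries.coeff n ((PowerSeries.mk fun m => if m = 0 then 0 else a m / m.factorial) ^ k) =
      betaBlocks a n k * k.factorial / n.factorial := by
  induction k with
  | zero =>
    intro n
    rw [pow_zero, PowerSeries.coeff_one, betaBlocks_zero]
    rcases eq_or_ne n 0 with rfl | hn
    · simp
    · simp [hn]
  | succ k ih =>
    intro n
    rw [pow_succ', PowerSeries.coeff_mul, Finset.Nat.sum_antidiagonal_eq_sum_range_succ_mk]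
    simp only [PowerSeries.coeff_mk, ih]
    have key : ∀ i ∈ Finset.range (n + 1),
        (if i = 0 then 0 else a i / i.factorial) *
          (betaBlocks a (n - i) k * k.factorial / (n - i).factorial) =
        (if i = 0 then 0 else (n.choose i : ℚ) * a i * betaBlocks a (n - i) k) *
          k.factorial / n.factorial := by
      intro i hi
      rcases eq_or_ne i 0 with rfl | hi0
      · simp
      · rw [if_neg hi0, if_neg hi0]
        have hle : i ≤ n := Nat.lt_succ_iff.mp (Finset.mem_range.mp hi)
        have hch : (n.choose i : ℚ) * i.factorial * (n - i).factorial = n.factorial := by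
          exact_mod_cast congrArg (Nat.cast : ℕ → ℚ)
            (Nat.choose_mul_factorial_mul_factorial hle)
        have h1 : (i.factorial : ℚ) ≠ 0 := Nat.cast_ne_zero.mpr (Nat.factorial_ne_zero _)
        have h2 : ((n - i).factorial : ℚ) ≠ 0 := Nat.cast_ne_zero.mpr (Nat.factorial_ne_zero _)
        have h3 : ((n.factorial : ℚ)) ≠ 0 := Nat.cast_ne_zero.mpr (Nat.factorial_ne_zero _)
        field_simp
        linear_combination (-(a i * betaBlocks a (n - i) k)) * hch
    rw [Finset.sum_congr rfl key, ← Finset.sum_div, ← Finset.sum_mul, ← beta_rec,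
      Nat.factorial_succ]
    push_cast
    ring

/-- Refined exponential formula:
`Σ_{n≥0} β_{n,k} X^n/n! = (1/k!)·(Σ_{n≥1} a(n) X^n/n!)^k`. -/
theorem refined_exponential_formula (a : ℕ → ℚ) (k : ℕ) :
    PowerSeries.mk (fun n => betaBlocks a n k / n.factorial) =
      (k.factorial : ℚ)⁻¹ •
        (PowerSeries.mk fun n => if n = 0 then 0 else a n / n.factorial) ^ k := by
  ext n
  rw [PowerSeries.coeff_mk, map_smul, smul_eq_mul, coeff_pow_eq]
  have hk : (k.factorial : ℚ) ≠ 0 := Nat.cast_ne_zero.mpr (Nat.factorial_ne_zero _)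
  field_simp
end

section
/- Exponential generating function for set partitions into lists: for n ≥ 0 let L_n = Σ_π Π_{B ∈ π} |B|!, the sum over all set partitions π of {1,…,n} (so L_n counts the set partitions of {1,…,n} into nonempty ordered lists; L_0 = 1). Then in ℚ[[X]] one has Σ_{n≥0} L_n X^n/n! = exp( Σ_{n≥1} X^n ), i.e. exp applied to the power series X/(1−X), which has zero constant term. -/
/-- `L_n = Σ_π Π_{B ∈ π} |B|!`, the number of set partitions of `{1,…,n}`
into nonempty ordered lists. -/
noncomputable def lah (n : ℕ) : ℚ :=
  ∑ π ∈ setPartitions n, ∏ B ∈ π, (B.card.factorial : ℚ)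

/-- The exponential `Σ_{k≥0} F^k / k!` of a power series `F` with zero constant
term, computed coefficientwise. -/
noncomputable def expComp (F : PowerSeries ℚ) : PowerSeries ℚ :=
  PowerSeries.mk fun n => ∑ k ∈ Finset.range (n + 1),
    (k.factorial : ℚ)⁻¹ * PowerSeries.coeff (R := ℚ) n (F ^ k)

open Finset

variable {α β : Type*} [DecidableEq α] [DecidableEq β]

/-- partition predicate on a finset -/
def IsPartOn (s : Finset α) (π : Finset (Finset α)) : Prop :=
  (∀ B ∈ π, B.Nonempty) ∧
  (∀ B ∈ π, ∀ C ∈ π, B ≠ C → B ∩ C = ∅) ∧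
  π.sup id = s

open scoped Classical in
noncomputable def partsOn (s : Finset α) : Finset (Finset (Finset α)) :=
  s.powerset.powerset.filter (IsPartOn s)

lemma mem_partsOn {s : Finset α} {π : Finset (Finset α)} :
    π ∈ partsOn s ↔ IsPartOn s π := by
  classical
  simp only [partsOn, mem_filter, mem_powerset, and_iff_right_iff_imp]
  intro h B hB
  rw [mem_powerset, ← h.2.2]
  exact le_sup (f := id) hB

noncomputable def lahOn (s : Finset α) : ℚ :=
  ∑ π ∈ partsOn s, ∏ B ∈ π, (B.card.factorial : ℚ)

lemma sup_map_finset (π : Finset (Finset α)) (f : α ↪ β) :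
    π.sup (fun B => B.map f) = (π.sup id).map f := by
  classical
  induction π using Finset.induction_on with
  | empty => simp
  | insert _ _ h ih => simp [Finset.sup_insert, ih, Finset.map_union]

lemma isPartOn_map_iff (s : Finset α) (f : α ↪ β) (π : Finset (Finset α)) :
    IsPartOn (s.map f) (π.map ⟨Finset.map f, Finset.map_injective f⟩) ↔ IsPartOn s π := by
  classical
  constructor
  · rintro ⟨h1, h2, h3⟩
    refine ⟨?_, ?_, ?_⟩
    · intro B hB
      have := h1 (B.map f) (Finset.mem_map_of_mem _ hB)
      simpa using this
    · intro B hB C hC hBC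
      have := h2 (B.map f) (Finset.mem_map_of_mem _ hB) (C.map f)
        (Finset.mem_map_of_mem _ hC) (fun h => hBC (Finset.map_injective f h))
      rw [← Finset.map_inter] at this
      simpa using this
    · rw [Finset.sup_map, Function.comp_def] at h3
      simp only [Function.Embedding.coeFn_mk, id_eq] at h3
      rw [sup_map_finset] at h3
      exact Finset.map_injective f h3
  · rintro ⟨h1, h2, h3⟩
    refine ⟨?_, ?_, ?_⟩
    · intro B hB
      rw [Finset.mem_map] at hB
      obtain ⟨C, hC, rfl⟩ := hB
      simpa using (h1 C hC)
    · intro B hB C hC hBC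
      rw [Finset.mem_map] at hB hC
      obtain ⟨B', hB', rfl⟩ := hB
      obtain ⟨C', hC', rfl⟩ := hC
      simp only [Function.Embedding.coeFn_mk] at *
      rw [← Finset.map_inter, h2 B' hB' C' hC' (fun h => hBC (by rw [h])), Finset.map_empty]
    · rw [Finset.sup_map, Function.comp_def]
      simp only [Function.Embedding.coeFn_mk, id_eq]
      rw [sup_map_finset, h3]

lemma lahOn_map (s : Finset α) (f : α ↪ β) : lahOn (s.map f) = lahOn s := by
  classical
  unfold lahOn
  rw [eq_comm]
  refine Finset.sum_bij (fun π _ => π.map ⟨Finset.map f, Finset.map_injective f⟩)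
    ?_ ?_ ?_ ?_
  · intro π hπ
    rw [mem_partsOn] at *
    exact (isPartOn_map_iff s f π).2 hπ
  · intro π hπ ρ hρ h
    exact Finset.map_injective _ h
  · intro ρ hρ
    rw [mem_partsOn] at hρ
    have hran : ∀ C ∈ ρ, ∀ x ∈ C, x ∈ Set.range f := by
      intro C hC x hx
      have : x ∈ ρ.sup id := Finset.le_sup (f := id) hC hx
      rw [hρ.2.2, Finset.mem_map] at this
      obtain ⟨y, _, rfl⟩ := this
      exact ⟨y, rfl⟩
    have key : (ρ.image (fun C => C.preimage f f.injective.injOn)).map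
        ⟨Finset.map f, Finset.map_injective f⟩ = ρ := by
      rw [Finset.map_eq_image, Finset.image_image]
      have : ∀ C ∈ ρ, (C.preimage f f.injective.injOn).map f = C := by
        intro C hC
        rw [Finset.map_eq_image, Finset.image_preimage]
        rw [Finset.filter_true_of_mem]
        intro x hx
        exact hran C hC x hx
      calc ρ.image (fun C => (C.preimage f f.injective.injOn).map f)
          = ρ.image id := Finset.image_congr (fun C hC => this C hC)
        _ = ρ := Finset.image_id
    refine ⟨ρ.image (fun C => C.preimage f f.injective.injOn), ?_, key⟩
    rw [mem_partsOn, ← isPartOn_map_iff s f, key]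
    exact hρ
  · intro π hπ
    rw [Finset.prod_map]
    apply Finset.prod_congr rfl
    intro B _
    simp

noncomputable def Lh (m : ℕ) : ℚ := lahOn (univ : Finset (Fin m))

lemma lahOn_eq_Lh (s : Finset α) : lahOn s = Lh s.card := by
  classical
  let e : Fin s.card ↪ α :=
    (s.equivFin.symm).toEmbedding.trans (Function.Embedding.subtype _)
  have he : ∀ i, e i = ↑(s.equivFin.symm i) := fun i => rfl
  have hmap : (univ : Finset (Fin s.card)).map e = s := by
    ext b
    simp only [Finset.mem_map, Finset.mem_univ, true_and]
    constructor
    · rintro ⟨i, rfl⟩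
      rw [he]
      exact (s.equivFin.symm i).2
    · intro hb
      exact ⟨s.equivFin ⟨b, hb⟩, by rw [he]; simp⟩
  rw [Lh, ← lahOn_map (univ : Finset (Fin s.card)) e, hmap]

open scoped Classical in
noncomputable def blockOf (a : α) (π : Finset (Finset α)) : Finset α :=
  (π.filter (fun B => a ∈ B)).sup id

lemma blockOf_spec {t : Finset α} {π : Finset (Finset α)} (h : IsPartOn t π)
    {a : α} (ha : a ∈ t) :
    blockOf a π ∈ π ∧ a ∈ blockOf a π ∧ ∀ B ∈ π, a ∈ B → B = blockOf a π := by
  classical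
  obtain ⟨B₀, hB₀, haB₀⟩ : ∃ B ∈ π, a ∈ B := by
    rw [← h.2.2] at ha
    simpa using (Finset.mem_sup.1 ha)
  have huniq : ∀ B ∈ π, a ∈ B → B = B₀ := by
    intro B hB haB
    by_contra hne
    have := h.2.1 B hB B₀ hB₀ hne
    have : a ∈ B ∩ B₀ := Finset.mem_inter.2 ⟨haB, haB₀⟩
    rw [h.2.1 B hB B₀ hB₀ hne] at this
    exact absurd this (Finset.notMem_empty a)
  have hfil : π.filter (fun B => a ∈ B) = {B₀} := by
    ext C
    simp only [Finset.mem_filter, Finset.mem_singleton]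
    constructor
    · rintro ⟨hC, haC⟩; exact huniq C hC haC
    · rintro rfl; exact ⟨hB₀, haB₀⟩
  have hbo : blockOf a π = B₀ := by
    rw [blockOf]
    have : (π.filter (fun B => a ∈ B)) = {B₀} := hfil
    rw [show ((π.filter (fun B => a ∈ B)).sup id : Finset α)
        = ({B₀} : Finset (Finset α)).sup id by rw [hfil]]
    exact Finset.sup_singleton
  rw [hbo]
  exact ⟨hB₀, haB₀, huniq⟩

lemma lahOn_insert {a : α} {s : Finset α} (ha : a ∉ s) :
    lahOn (insert a s) =
      ∑ T ∈ s.powerset, ((T.card + 1).factorial : ℚ) * lahOn (s \ T) := by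
  classical
  have hj : ∀ T ∈ s.powerset, ∀ ρ ∈ partsOn (s \ T),
      insert (insert a T) ρ ∈ partsOn (insert a s) := by
    intro T hT ρ hρ
    rw [Finset.mem_powerset] at hT
    rw [mem_partsOn] at hρ ⊢
    have hblk : ∀ B ∈ ρ, B ⊆ s \ T := by
      intro B hB
      rw [← hρ.2.2]
      exact Finset.le_sup (f := id) hB
    have hdis : ∀ B ∈ ρ, (insert a T) ∩ B = ∅ := by
      intro B hB
      ext x
      simp only [Finset.mem_inter, Finset.mem_insert, Finset.notMem_empty, iff_false]
      rintro ⟨hx1, hx2⟩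
      have hxs := hblk B hB hx2
      rw [Finset.mem_sdiff] at hxs
      rcases hx1 with rfl | hx1
      · exact ha hxs.1
      · exact hxs.2 hx1
    refine ⟨?_, ?_, ?_⟩
    · intro B hB
      rcases Finset.mem_insert.1 hB with rfl | hB
      · exact ⟨a, Finset.mem_insert_self a T⟩
      · exact hρ.1 B hB
    · intro B hB C hC hBC
      rcases Finset.mem_insert.1 hB with rfl | hB <;>
        rcases Finset.mem_insert.1 hC with rfl | hC
      · exact absurd rfl hBC
      · exact hdis C hC
      · rw [Finset.inter_comm]; exact hdis B hB
      · exact hρ.2.1 B hB C hC hBC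
    · rw [Finset.sup_insert, hρ.2.2]
      simp only [id_eq, Finset.sup_eq_union]
      rw [Finset.insert_union, Finset.union_sdiff_of_subset hT]
  simp only [lahOn, Finset.mul_sum]
  rw [Finset.sum_sigma' s.powerset (fun T => partsOn (s \ T))
    (fun T ρ => ((T.card + 1).factorial : ℚ) * ∏ B ∈ ρ, (B.card.factorial : ℚ))]
  have key : ∀ π ∈ partsOn (insert a s),
      blockOf a π ∈ π ∧ a ∈ blockOf a π ∧ ∀ B ∈ π, a ∈ B → B = blockOf a π :=
    fun π hπ => blockOf_spec (mem_partsOn.1 hπ) (Finset.mem_insert_self a s)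
  have hsub : ∀ π ∈ partsOn (insert a s), ∀ B ∈ π, B ⊆ insert a s := by
    intro π hπ B hB
    rw [← (mem_partsOn.1 hπ).2.2]
    exact Finset.le_sup (f := id) hB
  have hTs : ∀ π ∈ partsOn (insert a s), (blockOf a π).erase a ⊆ s := by
    intro π hπ x hx
    rw [Finset.mem_erase] at hx
    have := hsub π hπ _ (key π hπ).1 hx.2
    rcases Finset.mem_insert.1 this with rfl | h
    · exact absurd rfl hx.1
    · exact h
  have hi : ∀ π ∈ partsOn (insert a s),
      π.erase (blockOf a π) ∈ partsOn (s \ (blockOf a π).erase a) := by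
    intro π hπ
    obtain ⟨hB₀, haB₀, huniq⟩ := key π hπ
    have hp := mem_partsOn.1 hπ
    rw [mem_partsOn]
    refine ⟨?_, ?_, ?_⟩
    · intro B hB
      exact hp.1 B (Finset.mem_of_mem_erase hB)
    · intro B hB C hC hBC
      exact hp.2.1 B (Finset.mem_of_mem_erase hB) C (Finset.mem_of_mem_erase hC) hBC
    · ext x
      rw [Finset.mem_sup, Finset.mem_sdiff, Finset.mem_erase]
      constructor
      · rintro ⟨B, hB, hxB⟩
        rw [Finset.mem_erase] at hB
        simp only [id_eq] at hxB
        have hxB₀ : x ∉ blockOf a π := by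
          intro hx
          have := hp.2.1 B hB.2 _ hB₀ hB.1
          have : x ∈ B ∩ blockOf a π := Finset.mem_inter.2 ⟨hxB, hx⟩
          rw [hp.2.1 B hB.2 _ hB₀ hB.1] at this
          exact absurd this (Finset.notMem_empty x)
        have hxt := hsub π hπ B hB.2 hxB
        have hxa : x ≠ a := fun h => hxB₀ (h ▸ haB₀)
        rcases Finset.mem_insert.1 hxt with rfl | hxs
        · exact absurd rfl hxa
        · exact ⟨hxs, fun hc => hxB₀ hc.2⟩
      · rintro ⟨hxs, hxT⟩
        have : x ∈ π.sup id := by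
          rw [hp.2.2]; exact Finset.mem_insert_of_mem hxs
        obtain ⟨B, hB, hxB⟩ := Finset.mem_sup.1 this
        simp only [id_eq] at hxB
        have hxa : x ≠ a := fun h => ha (h ▸ hxs)
        have hBne : B ≠ blockOf a π := by
          rintro rfl
          exact hxT ⟨hxa, hxB⟩
        exact ⟨B, Finset.mem_erase.2 ⟨hBne, hB⟩, hxB⟩
  refine Finset.sum_bij'
    (fun π _ => (⟨(blockOf a π).erase a, π.erase (blockOf a π)⟩ :
      Σ _ : Finset α, Finset (Finset α)))
    (fun p _ => insert (insert a p.1) p.2) ?_ ?_ ?_ ?_ ?_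
  · intro π hπ
    rw [Finset.mem_sigma]
    exact ⟨Finset.mem_powerset.2 (hTs π hπ), hi π hπ⟩
  · intro p hp
    rw [Finset.mem_sigma] at hp
    exact hj p.1 hp.1 p.2 hp.2
  · intro π hπ
    obtain ⟨hB₀, haB₀, _⟩ := key π hπ
    simp only
    rw [Finset.insert_erase haB₀, Finset.insert_erase hB₀]
  · intro p hp
    rw [Finset.mem_sigma, Finset.mem_powerset] at hp
    obtain ⟨hT, hρ⟩ := hp
    have hmem := hj p.1 (Finset.mem_powerset.2 hT) p.2 hρ
    obtain ⟨_, _, huniq⟩ := key _ hmem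
    have haT : a ∉ p.1 := fun h => ha (hT h)
    have hbo : insert a p.1 = blockOf a (insert (insert a p.1) p.2) :=
      huniq _ (Finset.mem_insert_self _ _) (Finset.mem_insert_self a p.1)
    have hnotin : insert a p.1 ∉ p.2 := by
      intro hmem'
      have : insert a p.1 ⊆ s \ p.1 := by
        rw [← (mem_partsOn.1 hρ).2.2]
        exact Finset.le_sup (f := id) hmem'
      have := this (Finset.mem_insert_self a p.1)
      rw [Finset.mem_sdiff] at this
      exact ha this.1
    simp only [← hbo]
    rw [Finset.erase_insert haT, Finset.erase_insert hnotin]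
  · intro π hπ
    obtain ⟨hB₀, haB₀, _⟩ := key π hπ
    simp only
    have hcard : (blockOf a π).card = ((blockOf a π).erase a).card + 1 := by
      rw [Finset.card_erase_of_mem haB₀]
      have : 1 ≤ (blockOf a π).card := Finset.card_pos.2 ⟨a, haB₀⟩
      omega
    rw [← Finset.mul_prod_erase π _ hB₀, hcard]

lemma Lh_zero : Lh 0 = 1 := by
  classical
  have huniv : (univ : Finset (Fin 0)) = ∅ := rfl
  have : partsOn (univ : Finset (Fin 0)) = {∅} := by
    ext π
    rw [mem_partsOn, Finset.mem_singleton]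
    constructor
    · rintro ⟨h1, _, h3⟩
      rw [Finset.eq_empty_iff_forall_notMem]
      intro B hB
      obtain ⟨x, _⟩ := h1 B hB
      exact Fin.elim0 x
    · rintro rfl
      exact ⟨fun B hB => absurd hB (Finset.notMem_empty B),
        fun B hB => absurd hB (Finset.notMem_empty B),
        by simp [huniv]⟩
  rw [Lh, lahOn, this, Finset.sum_singleton, Finset.prod_empty]

lemma lah_eq_Lh (n : ℕ) : lah n = Lh n := by
  classical
  have hset : setPartitions n = partsOn (univ : Finset (Fin n)) := by
    ext π
    rw [mem_partsOn, setPartitions, Finset.mem_filter]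
    simp only [Finset.mem_univ, true_and]
    exact Iff.rfl
  rw [lah, hset, Lh, lahOn]

lemma Lh_succ (n : ℕ) :
    Lh (n + 1) = ∑ j ∈ Finset.range (n + 1),
      (n.choose j : ℚ) * ((j + 1).factorial : ℚ) * Lh (n - j) := by
  classical
  set a : Fin (n + 1) := 0 with ha'
  set s : Finset (Fin (n + 1)) := univ.erase a with hs
  have ha : a ∉ s := Finset.notMem_erase _ _
  have hins : insert a s = univ := Finset.insert_erase (Finset.mem_univ a)
  have hcards : s.card = n := by
    rw [hs, Finset.card_erase_of_mem (Finset.mem_univ a), Finset.card_univ,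
      Fintype.card_fin]
    omega
  have hrec := lahOn_insert ha
  rw [hins] at hrec
  rw [Lh, hrec, Finset.sum_powerset, hcards]
  refine Finset.sum_congr rfl ?_
  intro j hj
  rw [Finset.mem_range] at hj
  have hterm : ∀ T ∈ Finset.powersetCard j s,
      ((T.card + 1).factorial : ℚ) * lahOn (s \ T)
        = ((j + 1).factorial : ℚ) * Lh (n - j) := by
    intro T hT
    rw [Finset.mem_powersetCard] at hT
    rw [hT.2, lahOn_eq_Lh, Finset.card_sdiff_of_subset hT.1, hcards, hT.2]
  rw [Finset.sum_congr rfl hterm, Finset.sum_const, Finset.card_powersetCard, hcards,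
    nsmul_eq_mul, mul_assoc]

namespace ListsEgf

noncomputable def F : PowerSeries ℚ := PowerSeries.mk fun n => if n = 0 then 0 else 1

noncomputable def G : PowerSeries ℚ := PowerSeries.mk fun _ => (1 : ℚ)

lemma F_eq : F = PowerSeries.X * G := by
  ext n
  cases n with
  | zero => simp [F, G, PowerSeries.coeff_zero_eq_constantCoeff]
  | succ m => simp [F, G, PowerSeries.coeff_succ_X_mul]

noncomputable def a (n : ℕ) : ℚ := PowerSeries.coeff (R := ℚ) n (expComp F)

noncomputable def c (n k : ℕ) : ℚ := PowerSeries.coeff (R := ℚ) n (F ^ k)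

lemma c_eq_zero {n k : ℕ} (h : n < k) : c n k = 0 := by
  have : (PowerSeries.X : PowerSeries ℚ) ^ k ∣ F ^ k := by
    rw [F_eq, mul_pow]
    exact Dvd.intro _ rfl
  rw [PowerSeries.X_pow_dvd_iff] at this
  exact this n h

lemma a_def (n : ℕ) :
    a n = ∑ k ∈ Finset.range (n + 1), ((k.factorial : ℚ))⁻¹ * c n k := by
  simp [a, expComp, c, PowerSeries.coeff_mk]

lemma a_zero : a 0 = 1 := by
  simp [a_def, c, pow_zero]

lemma coeff_deriv_F (i : ℕ) : PowerSeries.coeff (R := ℚ) i (PowerSeries.derivativeFun F)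
    = (i + 1 : ℚ) := by
  rw [show PowerSeries.derivativeFun F = PowerSeries.derivative ℚ F from rfl,
    PowerSeries.coeff_derivative]
  simp [F, PowerSeries.coeff_mk]

lemma key_c (n k : ℕ) :
    ((n : ℚ) + 1) * c (n + 1) (k + 1)
      = ((k : ℚ) + 1) * ∑ p ∈ Finset.HasAntidiagonal.antidiagonal n, c p.1 k * ((p.2 : ℚ) + 1) := by
  have hder : (PowerSeries.derivative ℚ) (F ^ (k + 1))
      = (k + 1) • (F ^ k * (PowerSeries.derivative ℚ) F) := by
    have := Derivation.leibniz_pow (PowerSeries.derivative ℚ) F (n := k + 1)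
    rw [this]
    simp [smul_eq_mul, Nat.add_sub_cancel]
  have h1 : PowerSeries.coeff (R := ℚ) n ((PowerSeries.derivative ℚ) (F ^ (k + 1)))
      = c (n + 1) (k + 1) * ((n : ℚ) + 1) := by
    rw [PowerSeries.coeff_derivative]
    rfl
  have h2 : PowerSeries.coeff (R := ℚ) n (F ^ k * (PowerSeries.derivative ℚ) F)
      = ∑ p ∈ Finset.HasAntidiagonal.antidiagonal n, c p.1 k * ((p.2 : ℚ) + 1) := by
    rw [PowerSeries.coeff_mul]
    refine Finset.sum_congr rfl ?_
    intro p hp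
    rw [show ((PowerSeries.derivative ℚ) F : PowerSeries ℚ)
      = PowerSeries.derivativeFun F from rfl, coeff_deriv_F]
    rfl
  calc ((n : ℚ) + 1) * c (n + 1) (k + 1)
      = PowerSeries.coeff (R := ℚ) n ((PowerSeries.derivative ℚ) (F ^ (k + 1))) := by
        rw [h1]; ring
    _ = ((k : ℚ) + 1) * ∑ p ∈ Finset.HasAntidiagonal.antidiagonal n, c p.1 k * ((p.2 : ℚ) + 1) := by
        rw [hder, map_nsmul, nsmul_eq_mul, h2]
        push_cast
        ring

lemma a_trunc (j n : ℕ) (h : j ≤ n) :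
    a j = ∑ k ∈ Finset.range (n + 1), ((k.factorial : ℚ))⁻¹ * c j k := by
  rw [a_def]
  refine Finset.sum_subset ?_ ?_
  · exact Finset.range_subset_range.2 (by omega)
  · intro k hk hk'
    rw [Finset.mem_range] at hk
    rw [Finset.mem_range, not_lt] at hk'
    rw [c_eq_zero (by omega), mul_zero]

lemma key_a (n : ℕ) :
    ((n : ℚ) + 1) * a (n + 1) = ∑ j ∈ Finset.range (n + 1), ((j : ℚ) + 1) * a (n - j) := by
  have step1 : ((n : ℚ) + 1) * a (n + 1)
      = ∑ k ∈ Finset.range (n + 1),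
          (((k + 1).factorial : ℚ))⁻¹ * (((n : ℚ) + 1) * c (n + 1) (k + 1)) := by
    rw [a_def, Finset.mul_sum, Finset.sum_range_succ']
    have hc0 : c (n + 1) 0 = 0 := by
      simp [c, pow_zero, PowerSeries.coeff_one]
    rw [hc0]
    simp only [mul_zero, add_zero]
    refine Finset.sum_congr rfl ?_
    intro k _
    ring
  rw [step1]
  have step2 : ∀ k ∈ Finset.range (n + 1),
      (((k + 1).factorial : ℚ))⁻¹ * (((n : ℚ) + 1) * c (n + 1) (k + 1))
        = ((k.factorial : ℚ))⁻¹ *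
            ∑ p ∈ Finset.HasAntidiagonal.antidiagonal n, c p.1 k * ((p.2 : ℚ) + 1) := by
    intro k _
    rw [key_c]
    rw [Nat.factorial_succ]
    push_cast
    have h1 : (k.factorial : ℚ) ≠ 0 := Nat.cast_ne_zero.2 k.factorial_ne_zero
    have h2 : ((k : ℚ) + 1) ≠ 0 := by positivity
    rw [mul_inv]
    field_simp
  rw [Finset.sum_congr rfl step2]
  simp_rw [Finset.mul_sum]
  rw [Finset.sum_comm]
  have step3 : ∀ p ∈ Finset.HasAntidiagonal.antidiagonal n,
      ∑ k ∈ Finset.range (n + 1),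
        ((k.factorial : ℚ))⁻¹ * (c p.1 k * ((p.2 : ℚ) + 1))
      = ((p.2 : ℚ) + 1) * a p.1 := by
    intro p hp
    rw [Finset.HasAntidiagonal.mem_antidiagonal] at hp
    rw [a_trunc p.1 n (by omega), Finset.mul_sum]
    refine Finset.sum_congr rfl ?_
    intro k _
    ring
  rw [Finset.sum_congr rfl step3]
  rw [Finset.Nat.sum_antidiagonal_eq_sum_range_succ_mk]
  rw [← Finset.sum_range_reflect]
  refine Finset.sum_congr rfl ?_
  intro j hj
  rw [Finset.mem_range] at hj
  have h1 : n + 1 - 1 - j = n - j := by omega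
  have h2 : n - (n - j) = j := by omega
  rw [h1, h2]

end ListsEgf

lemma lah_eq_fact_mul_a (n : ℕ) : lah n = (n.factorial : ℚ) * ListsEgf.a n := by
  induction n using Nat.strong_induction_on with
  | _ n ih =>
    match n with
    | 0 =>
      rw [lah_eq_Lh, Lh_zero, ListsEgf.a_zero]
      norm_num
    | Nat.succ m =>
      rw [lah_eq_Lh, Lh_succ]
      have hterm : ∀ j ∈ Finset.range (m + 1),
          (m.choose j : ℚ) * ((j + 1).factorial : ℚ) * Lh (m - j)
            = (m.factorial : ℚ) * (((j : ℚ) + 1) * ListsEgf.a (m - j)) := by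
        intro j hj
        rw [Finset.mem_range] at hj
        rw [← lah_eq_Lh, ih (m - j) (by omega)]
        have hfac : (m.choose j : ℚ) * (j.factorial : ℚ) * ((m - j).factorial : ℚ)
            = (m.factorial : ℚ) := by
          rw_mod_cast [Nat.choose_mul_factorial_mul_factorial (by omega : j ≤ m)]
        rw [Nat.factorial_succ]
        push_cast
        linear_combination ((j : ℚ) + 1) * (ListsEgf.a (m - j)) * hfac
      rw [Finset.sum_congr rfl hterm, ← Finset.mul_sum, ← ListsEgf.key_a,
        Nat.factorial_succ]
      push_cast
      ring


/-- EGF for set partitions into lists: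
`Σ_{n≥0} L_n X^n/n! = exp(Σ_{n≥1} X^n)`. -/
theorem lists_egf :
    PowerSeries.mk (fun n => lah n / n.factorial) =
      expComp (PowerSeries.mk fun n => if n = 0 then 0 else 1) := by
  have hF : (PowerSeries.mk fun n => if n = 0 then (0 : ℚ) else 1) = ListsEgf.F := rfl
  rw [hF]
  ext n
  rw [PowerSeries.coeff_mk, lah_eq_fact_mul_a]
  have h2 : (PowerSeries.coeff (R := ℚ) n) (expComp ListsEgf.F) = ListsEgf.a n := rfl
  rw [h2]
  rw [mul_div_cancel_left₀ _ (Nat.cast_ne_zero.2 n.factorial_ne_zero : (n.factorial:ℚ) ≠ 0)]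
end
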